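/- arXiv:1712.02569 — 4 statements merged into one kernel-verified Lean document; each statement's English description precedes it below -/
import Mathlib

section
/- For every set A ⊆ ω₁ × ω₁ belonging to the σ-ideal 𝓘 and all sets B₁, …, Bₙ ⊆ ω₁ × ω₁ (n ≥ 1) not belonging to 𝓘, there exist a set S ⊆ ω₁ and a strictly decreasing function f : S → ω₁ whose graph is disjoint from A and intersects each Bᵢ for i = 1, …, n (one may take S finite with exactly n elements). -/
open Cardinal Filter Topology Set

noncomputable section
open Classical

/-- `ω₁`, the first uncountable ordinal, viewed as the linearly ordered type of
all countable ordinals. -/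
abbrev Omega1 : Type 1 := ↥(Set.Iio (Cardinal.aleph 1).ord)

/-- The vertical section `A_α = {β : (α, β) ∈ A}`. -/
def vertSection (A : Set (Omega1 × Omega1)) (α : Omega1) : Set Omega1 :=
  {β | (α, β) ∈ A}

/-- The horizontal section `A^α = {γ : (γ, α) ∈ A}`. -/
def horSection (A : Set (Omega1 × Omega1)) (α : Omega1) : Set Omega1 :=
  {γ | (γ, α) ∈ A}

/-- Membership in the σ-ideal `𝓘`: for all but countably many `α ∈ ω₁` both the
vertical and the horizontal section of `A` at `α` are countable. -/
def MemIdealI (A : Set (Omega1 × Omega1)) : Prop :=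
  {α : Omega1 | ¬ ((vertSection A α).Countable ∧ (horSection A α).Countable)}.Countable

lemma Omega1.countable_Iic (γ : Omega1) : (Set.Iic γ).Countable := by
  rw [Cardinal.countable_iff_lt_aleph_one]
  have hinj : Function.Injective
      (fun x : ↥(Set.Iic γ) => (⟨x.1.1,
        Set.mem_Iio.mpr (Order.lt_succ_iff.mpr (Subtype.coe_le_coe.mpr (Set.mem_Iic.mp x.2)))⟩ :
        ↥(Set.Iio (Order.succ γ.1)))) := by
    intro x y hxy
    have h := congrArg Subtype.val hxy
    apply Subtype.ext (Subtype.ext h)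
  have h1 : #↥(Set.Iic γ) ≤ #↥(Set.Iio (Order.succ γ.1)) := Cardinal.mk_le_of_injective hinj
  have h2 : #↥(Set.Iio (Order.succ γ.1)) = Cardinal.lift.{1} (Order.succ γ.1).card :=
    Ordinal.mk_Iio_ordinal _
  have h3 : (Order.succ γ.1).card < Cardinal.aleph 1 := by
    rw [← Cardinal.lt_ord]
    exact (Cardinal.isSuccLimit_ord (Cardinal.aleph0_le_aleph 1)).succ_lt γ.2
  have h4 : Cardinal.lift.{1} (Order.succ γ.1).card < Cardinal.lift.{1} (Cardinal.aleph 1) :=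
    Cardinal.lift_lt.mpr h3
  rw [Cardinal.lift_aleph] at h4
  calc #↥(Set.Iic γ) ≤ _ := h1
    _ = _ := h2
    _ < _ := by simpa using h4

lemma Omega1.exists_gt {s : Set Omega1} (hs : ¬ s.Countable) (γ : Omega1) :
    ∃ x ∈ s, γ < x := by
  by_contra h
  push_neg at h
  exact hs ((Omega1.countable_Iic γ).mono h)

lemma Omega1.diff_uncountable {s t : Set Omega1} (hs : ¬ s.Countable) (ht : t.Countable) :
    ¬ (s \ t).Countable := fun h => hs ((h.union ht).mono (Set.subset_diff_union s t))

lemma Omega1.pick (m : ℕ) (s : Fin m → Set Omega1) (hs : ∀ j, ¬ (s j).Countable)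
    (γ : Omega1) :
    ∃ a : Fin m → Omega1, StrictMono a ∧ (∀ j, a j ∈ s j) ∧ ∀ j, γ < a j := by
  induction m generalizing γ with
  | zero => exact ⟨fun j => j.elim0, fun j => j.elim0, fun j => j.elim0, fun j => j.elim0⟩
  | succ m ih =>
    obtain ⟨x, hxs, hγx⟩ := Omega1.exists_gt (hs 0) γ
    obtain ⟨a', ha'm, ha's, ha'b⟩ := ih (fun j => s j.succ) (fun j => hs j.succ) x
    refine ⟨Fin.cases x a', ?_, ?_, ?_⟩
    · intro u v huv
      induction u using Fin.cases with
      | zero =>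
        induction v using Fin.cases with
        | zero => exact absurd huv (lt_irrefl _)
        | succ v => simpa using ha'b v
      | succ u =>
        induction v using Fin.cases with
        | zero => exact absurd huv (by simp [Fin.lt_def])
        | succ v => simpa using ha'm (by exact_mod_cast Fin.succ_lt_succ_iff.mp huv)
    · intro j
      induction j using Fin.cases with
      | zero => simpa using hxs
      | succ j => simpa using ha's j
    · intro j
      induction j using Fin.cases with
      | zero => simpa using hγx
      | succ j => simpa using hγx.trans (ha'b j)

/-- For any `A` in the σ-ideal `𝓘` and sets `B₁, …, Bₙ` (`n ≥ 1`) not in `𝓘`, there is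
a strictly decreasing function `f : S → ω₁`, `S ⊆ ω₁`, whose graph omits `A` and meets
each `Bᵢ`; one may take `S` finite with exactly `n` elements. -/
theorem exists_strictAnti_graph_omitting_meeting
    (A : Set (Omega1 × Omega1)) (hA : MemIdealI A)
    (n : ℕ) (hn : 1 ≤ n) (B : Fin n → Set (Omega1 × Omega1))
    (hB : ∀ i, ¬ MemIdealI (B i)) :
    ∃ (S : Set Omega1) (f : Omega1 → Omega1),
      S.Finite ∧ S.ncard = n ∧ StrictAntiOn f S ∧
      (∀ α ∈ S, (α, f α) ∉ A) ∧ (∀ i, ∃ α ∈ S, (α, f α) ∈ B i) := by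
  classical
  have hγ0 : (0 : Ordinal) < (Cardinal.aleph 1).ord := by
    rw [Cardinal.lt_ord]
    simpa using Cardinal.aleph_pos 1
  set γ0 : Omega1 := ⟨0, hγ0⟩ with hγ0def
  have : Nonempty Omega1 := ⟨γ0⟩
  set NA := {α : Omega1 | ¬ ((vertSection A α).Countable ∧ (horSection A α).Countable)}
    with hNAdef
  have hNAc : NA.Countable := hA
  have hNAout : ∀ α : Omega1, α ∉ NA →
      (vertSection A α).Countable ∧ (horSection A α).Countable := by
    intro α hα
    by_contra h
    exact hα h
  set Vt : Fin n → Prop := fun i => ¬ {α | ¬ (vertSection (B i) α).Countable}.Countable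
    with hVtdef
  have hHt : ∀ i, ¬ Vt i → ¬ {β | ¬ (horSection (B i) β).Countable}.Countable := by
    intro i hv hh
    apply hB i
    refine (((not_not.mp hv).union hh).mono ?_)
    intro α hα
    simp only [Set.mem_setOf_eq, Set.mem_union] at *
    tauto
  set F1 : Finset (Fin n) := Finset.univ.filter Vt with hF1def
  set F2 : Finset (Fin n) := Finset.univ.filter (fun i => ¬ Vt i) with hF2def
  set k1 := F1.card with hk1def
  set k2 := F2.card with hk2def
  have hk : k1 + k2 = n := by
    rw [hk1def, hk2def, Finset.card_filter_add_card_filter_not]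
    simp
  set e1 : Fin k1 ↪o Fin n := F1.orderEmbOfFin rfl with he1def
  set e2 : Fin k2 ↪o Fin n := F2.orderEmbOfFin rfl with he2def
  have he1V : ∀ j, Vt (e1 j) := by
    intro j
    exact (Finset.mem_filter.mp (Finset.orderEmbOfFin_mem F1 rfl j)).2
  have he2H : ∀ j, ¬ Vt (e2 j) := by
    intro j
    exact (Finset.mem_filter.mp (Finset.orderEmbOfFin_mem F2 rfl j)).2
  -- phase 1 : first coordinates of the V-points
  obtain ⟨a, ham, has, -⟩ := Omega1.pick k1
    (fun j => {α | ¬ (vertSection (B (e1 j)) α).Countable} \ NA)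
    (fun j => Omega1.diff_uncountable (he1V j) hNAc) γ0
  obtain ⟨γ1, hγ1⟩ := (Set.finite_range a).bddAbove
  -- phase 2 : second coordinates of the H-points (chosen in increasing order, then reversed)
  obtain ⟨b, hbm, hbs, -⟩ := Omega1.pick k2
    (fun j => {β | ¬ (horSection (B (e2 j.rev)) β).Countable} \ NA)
    (fun j => Omega1.diff_uncountable (hHt _ (he2H j.rev)) hNAc) γ0
  obtain ⟨γ2, hγ2⟩ := (Set.finite_range b).bddAbove
  set bb : Fin k2 → Omega1 := fun m => b m.rev with hbbdef
  have hbbanti : StrictAnti bb := fun m m' h => hbm (Fin.rev_lt_rev.mpr h)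
  have hbbs : ∀ m, ¬ (horSection (B (e2 m)) (bb m)).Countable ∧ bb m ∉ NA := by
    intro m
    have := hbs m.rev
    rw [Fin.rev_rev] at this
    exact this
  have hbble : ∀ m, bb m ≤ γ2 := fun m => hγ2 (Set.mem_range_self m.rev)
  -- phase 3 : first coordinates of the H-points
  obtain ⟨c, hcm, hcs, hcb⟩ := Omega1.pick k2
    (fun m => horSection (B (e2 m)) (bb m) \ horSection A (bb m))
    (fun m => Omega1.diff_uncountable (hbbs m).1 (hNAout _ (hbbs m).2).2) γ1
  -- phase 4 : second coordinates of the V-points (in increasing order, then reversed)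
  obtain ⟨d, hdm, hds, hdb⟩ := Omega1.pick k1
    (fun j => vertSection (B (e1 j.rev)) (a j.rev) \ vertSection A (a j.rev))
    (fun j => Omega1.diff_uncountable (has j.rev).1 (hNAout _ (has j.rev).2).1) γ2
  set dd : Fin k1 → Omega1 := fun j => d j.rev with hdddef
  have hddanti : StrictAnti dd := fun j j' h => hdm (Fin.rev_lt_rev.mpr h)
  have hdds : ∀ j, dd j ∈ vertSection (B (e1 j)) (a j) \ vertSection A (a j) := by
    intro j
    have := hds j.rev
    rw [Fin.rev_rev] at this
    exact this
  have hddb : ∀ j, γ2 < dd j := fun j => hdb j.rev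
  -- assembling the points
  set q : Fin n → Omega1 × Omega1 := fun t =>
    if h : (t : ℕ) < k1 then (a ⟨t, h⟩, dd ⟨t, h⟩)
    else (c ⟨(t : ℕ) - k1, by omega⟩, bb ⟨(t : ℕ) - k1, by omega⟩) with hqdef
  have hqV : ∀ (t : Fin n) (h : (t : ℕ) < k1), q t = (a ⟨t, h⟩, dd ⟨t, h⟩) := by
    intro t h; simp only [hqdef, dif_pos h]
  have hqH : ∀ (t : Fin n) (h : ¬ (t : ℕ) < k1),
      q t = (c ⟨(t : ℕ) - k1, by omega⟩, bb ⟨(t : ℕ) - k1, by omega⟩) := by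
    intro t h; simp only [hqdef, dif_neg h]
  have hfst : StrictMono (fun t => (q t).1) := by
    intro t t' htt'
    have htt : (t : ℕ) < (t' : ℕ) := htt'
    show (q t).1 < (q t').1
    by_cases h : (t : ℕ) < k1
    · rw [hqV t h]
      by_cases h' : (t' : ℕ) < k1
      · rw [hqV t' h']
        exact ham (by simpa [Fin.mk_lt_mk] using htt)
      · rw [hqH t' h']
        exact lt_of_le_of_lt (hγ1 (Set.mem_range_self _)) (hcb _)
    · have h' : ¬ (t' : ℕ) < k1 := by omega
      rw [hqH t h, hqH t' h']
      exact hcm (by simp only [Fin.mk_lt_mk]; omega)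
  have hsnd : StrictAnti (fun t => (q t).2) := by
    intro t t' htt'
    have htt : (t : ℕ) < (t' : ℕ) := htt'
    show (q t').2 < (q t).2
    by_cases h : (t : ℕ) < k1
    · rw [hqV t h]
      by_cases h' : (t' : ℕ) < k1
      · rw [hqV t' h']
        exact hddanti (by simpa [Fin.mk_lt_mk] using htt)
      · rw [hqH t' h']
        exact lt_of_le_of_lt (hbble _) (hddb _)
    · have h' : ¬ (t' : ℕ) < k1 := by omega
      rw [hqH t h, hqH t' h']
      exact hbbanti (by simp only [Fin.mk_lt_mk]; omega)
  have hqA : ∀ t, q t ∉ A := by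
    intro t
    by_cases h : (t : ℕ) < k1
    · rw [hqV t h]
      exact (hdds ⟨t, h⟩).2
    · rw [hqH t h]
      exact (hcs ⟨(t : ℕ) - k1, by omega⟩).2
  have hqB : ∀ i, ∃ t, q t ∈ B i := by
    intro i
    by_cases hv : Vt i
    · have hiF : i ∈ F1 := by rw [hF1def, Finset.mem_filter]; exact ⟨Finset.mem_univ i, hv⟩
      have : i ∈ Set.range e1 := by
        rw [he1def, Finset.range_orderEmbOfFin]
        exact hiF
      obtain ⟨j, hj⟩ := this
      have hjlt : (j : ℕ) < k1 := j.2
      refine ⟨⟨(j : ℕ), by omega⟩, ?_⟩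
      rw [hqV ⟨(j : ℕ), by omega⟩ hjlt]
      have : (⟨(j : ℕ), hjlt⟩ : Fin k1) = j := by ext; rfl
      rw [this, ← hj]
      exact (hdds j).1
    · have hiF : i ∈ F2 := by rw [hF2def, Finset.mem_filter]; exact ⟨Finset.mem_univ i, hv⟩
      have : i ∈ Set.range e2 := by
        rw [he2def, Finset.range_orderEmbOfFin]
        exact hiF
      obtain ⟨m, hm⟩ := this
      have hmlt : (m : ℕ) < k2 := m.2
      refine ⟨⟨k1 + (m : ℕ), by omega⟩, ?_⟩
      rw [hqH ⟨k1 + (m : ℕ), by omega⟩ (by simp)]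
      have : (⟨k1 + (m : ℕ) - k1, by omega⟩ : Fin k2) = m := by ext; simp
      rw [this, ← hm]
      exact (hcs m).1
  -- final packaging
  set g : Fin n → Omega1 := fun t => (q t).1 with hgdef
  have hginj : Function.Injective g := hfst.injective
  set f : Omega1 → Omega1 := fun α => if h : ∃ t, g t = α then (q h.choose).2 else α with hfdef
  have hfg : ∀ t, f (g t) = (q t).2 := by
    intro t
    have hex : ∃ t', g t' = g t := ⟨t, rfl⟩
    have : hex.choose = t := hginj hex.choose_spec
    simp only [hfdef, dif_pos hex, this]
  have hqeta : ∀ t, (g t, f (g t)) = q t := by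
    intro t
    rw [hfg t]
  refine ⟨Set.range g, f, Set.finite_range g, ?_, ?_, ?_, ?_⟩
  · rw [← Set.image_univ, Set.ncard_image_of_injective _ hginj, Set.ncard_univ]
    simp
  · rintro α ⟨t, rfl⟩ α' ⟨t', rfl⟩ hlt
    have htt' : t < t' := by
      by_contra h
      push_neg at h
      exact absurd hlt (not_lt.mpr (hfst.monotone h))
    rw [hfg t, hfg t']
    exact hsnd htt'
  · rintro α ⟨t, rfl⟩ hmem
    rw [hqeta t] at hmem
    exact hqA t hmem
  · intro i
    obtain ⟨t, ht⟩ := hqB i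
    exact ⟨g t, Set.mem_range_self t, by rw [hqeta t]; exact ht⟩

end
end

section
/- The space 𝒳 of all finite graphs of strictly decreasing partial functions from ω₁ to ω₁, with the topology inherited from {0,1}^(ω₁×ω₁), is not bisequential. -/
open Cardinal Filter Topology Set

noncomputable section
open Classical

/-- `F` is a finite graph of a strictly decreasing partial function: `F` is finite,
contains no two pairs with the same first coordinate, and whenever
`(α,β), (α',β') ∈ F` with `α < α'` then `β > β'`. -/
def IsDecGraph {T : Type*} [LinearOrder T] (F : Set (T × T)) : Prop :=
  F.Finite ∧ (∀ p ∈ F, ∀ q ∈ F, p.1 = q.1 → p = q) ∧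
    (∀ p ∈ F, ∀ q ∈ F, p.1 < q.1 → q.2 < p.2)

/-- The characteristic function of a set, with values in `{0,1} = Bool`. -/
def chi {T : Type*} (A : Set T) : T → Bool := fun x => if x ∈ A then true else false

/-- The space `𝒳` (over a linear order `T`) of characteristic functions of finite
graphs of strictly decreasing partial functions on `T`, viewed as a subset of the
product space `{0,1}^(T × T)`; it carries the subspace topology. -/
def XSpace (T : Type*) [LinearOrder T] : Set ((T × T) → Bool) :=
  {f | ∃ F : Set (T × T), IsDecGraph F ∧ f = chi F}

/-- The space `𝒳_B = {A ∈ 𝒳 : A ⊆ B}`, as a subset of `{0,1}^(ω₁ × ω₁)`. -/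
def XSpaceIn (B : Set (Omega1 × Omega1)) : Set ((Omega1 × Omega1) → Bool) :=
  {f | ∃ F : Set (Omega1 × Omega1), IsDecGraph F ∧ F ⊆ B ∧ f = chi F}

/-- The support of a point of `{0,1}^T`: the set of which it is the
characteristic function. -/
def supp {T : Type*} (f : T → Bool) : Set T := {x | f x = true}

/-- A topological space `X` is bisequential if for every ultrafilter `𝒰` on `X`
converging to a point `x` (every neighbourhood of `x` belongs to `𝒰`) there is a
decreasing sequence `U₀ ⊇ U₁ ⊇ ⋯` of members of `𝒰` converging to `x` (every
neighbourhood of `x` contains `Uₙ` for all sufficiently large `n`). -/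
def Bisequential (X : Type*) [TopologicalSpace X] : Prop :=
  ∀ (𝒰 : Ultrafilter X) (x : X), (𝒰 : Filter X) ≤ 𝓝 x →
    ∃ U : ℕ → Set X, (∀ n, U n ∈ 𝒰) ∧ (∀ n, U (n + 1) ⊆ U n) ∧
      ∀ V ∈ 𝓝 x, ∀ᶠ n in atTop, U n ⊆ V



lemma omega1_isLimit : Order.IsSuccLimit ((Cardinal.aleph 1).ord) :=
  Cardinal.isSuccLimit_ord (le_of_lt aleph0_lt_aleph_one)

lemma omega1_uncountable (s : Set Omega1) (hs : s.Countable) : ∃ α : Omega1, α ∉ s := by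
  by_contra h
  push_neg at h
  have huniv : s = Set.univ := eq_univ_iff_forall.2 h
  rw [huniv] at hs
  have h1 : #Omega1 ≤ (ℵ₀ : Cardinal.{1}) := Cardinal.mk_le_aleph0_iff.2 (Set.countable_univ_iff.1 hs)
  have h2 : #Omega1 = Cardinal.lift.{1,0} (Cardinal.aleph.{0} 1) := by
    have h5 := Ordinal.mk_Iio_ordinal (Cardinal.aleph.{0} 1).ord
    rw [Cardinal.card_ord] at h5
    exact h5
  rw [h2] at h1
  have h3 : Cardinal.lift.{1,0} (Cardinal.aleph.{0} 1) ≤ Cardinal.lift.{1,0} ℵ₀ := by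
    rwa [Cardinal.lift_aleph0]
  exact absurd (Cardinal.lift_le.1 h3) (not_le.2 aleph0_lt_aleph_one)

lemma omega1_bound (s : Set Omega1) (hs : s.Countable) : ∃ β : Omega1, ∀ γ ∈ s, γ < β := by
  rcases s.eq_empty_or_nonempty with rfl | hne
  · exact ⟨⟨0, omega1_isLimit.pos⟩, by simp⟩
  · obtain ⟨f, hf⟩ := hs.exists_eq_range hne
    have h1 : (⨆ n, (f n).1) < (Cardinal.aleph 1).ord := by
      apply Ordinal.iSup_lt_ord _ (fun n => (f n).2)
      rw [Cardinal.isRegular_aleph_one.cof_eq]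
      simpa using aleph0_lt_aleph_one
    have h2 : (⨆ n, (f n).1) + 1 < (Cardinal.aleph 1).ord := by
      rw [Ordinal.add_one_eq_succ]; exact omega1_isLimit.succ_lt h1
    refine ⟨⟨(⨆ n, (f n).1) + 1, h2⟩, ?_⟩
    intro γ hγ
    rw [hf] at hγ
    obtain ⟨n, rfl⟩ := hγ
    have h3 : (f n).1 ≤ ⨆ n, (f n).1 := Ordinal.le_iSup (fun n => (f n).1) n
    have h4 : (f n).1 < (⨆ n, (f n).1) + 1 := by
      rw [Ordinal.add_one_eq_succ]; exact h3.trans_lt (Order.lt_succ _)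
    exact Subtype.coe_lt_coe.1 h4

lemma omega1_Iic_countable (δ : Omega1) : (Set.Iic δ).Countable := by
  have hlt : δ.1 + 1 < (Cardinal.aleph 1).ord := by
    rw [Ordinal.add_one_eq_succ]; exact omega1_isLimit.succ_lt δ.2
  have h1 : (Set.Iio (δ.1 + 1)).Countable := by
    rw [Cardinal.countable_iff_lt_aleph_one, Ordinal.mk_Iio_ordinal]
    have hc : (δ.1 + 1).card < Cardinal.aleph 1 := Cardinal.lt_ord.1 hlt
    have := Cardinal.lift_lt.{0,1}.2 hc
    rwa [Cardinal.lift_aleph, Ordinal.lift_one] at this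
  have h2 : Set.Iic δ = Subtype.val ⁻¹' Set.Iio (δ.1 + 1) := by
    ext x
    simp only [Set.mem_Iic, Set.mem_preimage, Set.mem_Iio, Ordinal.add_one_eq_succ,
      Order.lt_succ_iff]
    exact Subtype.coe_le_coe.symm
  rw [h2]
  exact h1.preimage Subtype.val_injective

lemma omega1_unbounded_of_uncountable {W : Set Omega1} (hW : ¬ W.Countable) (δ : Omega1) :
    ∃ α ∈ W, δ < α := by
  by_contra h
  push_neg at h
  exact hW ((omega1_Iic_countable δ).mono fun α hα => h α hα)

lemma chi_eq_true {T : Type*} {A : Set T} {x : T} : chi A x = true ↔ x ∈ A := by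
  simp [chi]

lemma chi_eq_false {T : Type*} {A : Set T} {x : T} : chi A x = false ↔ x ∉ A := by
  simp [chi]

lemma supp_chi {T : Type*} (A : Set T) : supp (chi A) = A := by
  ext x
  simp [supp, chi]

lemma isDecGraph_empty : IsDecGraph (∅ : Set (Omega1 × Omega1)) :=
  ⟨Set.finite_empty, by simp, by simp⟩

lemma isDecGraph_singleton (p : Omega1 × Omega1) : IsDecGraph ({p} : Set (Omega1 × Omega1)) := by
  refine ⟨Set.finite_singleton _, ?_, ?_⟩
  · rintro q rfl r rfl _; rfl
  · rintro q rfl r rfl h; exact absurd h (lt_irrefl _)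

lemma isDecGraph_insert {F : Set (Omega1 × Omega1)} (hF : IsDecGraph F) {α₀ β₀ : Omega1}
    (hlt : ∀ p ∈ F, α₀ < p.1 ∧ p.2 < β₀) : IsDecGraph (insert (α₀, β₀) F) := by
  refine ⟨hF.1.insert _, ?_, ?_⟩
  · rintro p (rfl | hp) q (rfl | hq) heq
    · rfl
    · exact absurd heq (ne_of_lt (hlt q hq).1)
    · exact absurd heq.symm (ne_of_lt (hlt p hp).1)
    · exact hF.2.1 p hp q hq heq
  · rintro p (rfl | hp) q (rfl | hq) hlt'
    · exact absurd hlt' (lt_irrefl _)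
    · exact (hlt q hq).2
    · exact absurd hlt' (not_lt.2 (le_of_lt (hlt p hp).1))
    · exact hF.2.2 p hp q hq hlt'

/-- `Npt p` : the basic neighbourhood condition "`p` is not in the support". -/
def Npt (p : Omega1 × Omega1) : Set ↥(XSpace Omega1) := {f | f.1 p = false}

/-- `Wbig C` : the set of `α` such that the vertical section of the complement of `C`
at `α` is unbounded in `ω₁`. -/
def Wbig (C : Set (Omega1 × Omega1)) : Set Omega1 := {α | ¬ BddAbove {β | (α, β) ∉ C}}

/-- `Zset C` : the set of points of `𝒳` whose support is not contained in `C`. -/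
def Zset (C : Set (Omega1 × Omega1)) : Set ↥(XSpace Omega1) := {f | ¬ supp f.1 ⊆ C}

/-- The generating family for our ultrafilter. -/
def Bfam : Set (Set ↥(XSpace Omega1)) :=
  Set.range Npt ∪ Zset '' {C | ¬ (Wbig C).Countable}

lemma Npt_inj : Function.Injective Npt := by
  intro p q h
  by_contra hne
  have h1 : (⟨chi {p}, {p}, isDecGraph_singleton p, rfl⟩ : ↥(XSpace Omega1)) ∈ Npt q := by
    show chi {p} q = false
    rw [chi_eq_false]
    simp [hne, Ne.symm hne]
  rw [← h] at h1
  have h2 : chi {p} p = false := h1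
  rw [chi_eq_false] at h2
  exact h2 rfl

lemma Zset_notmem {C : Set (Omega1 × Omega1)} {p : Omega1 × Omega1} (hp : p ∉ C) :
    (⟨chi {p}, {p}, isDecGraph_singleton p, rfl⟩ : ↥(XSpace Omega1)) ∈ Zset C := by
  show ¬ supp (chi {p}) ⊆ C
  rw [supp_chi]
  exact fun h => hp (h rfl)

lemma Zset_inj : Function.Injective Zset := by
  have key : ∀ D D' : Set (Omega1 × Omega1), Zset D = Zset D' → ∀ p, p ∉ D' → p ∉ D := by
    intro D D' hDD' p hp hpD
    have h1 := Zset_notmem hp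
    rw [← hDD'] at h1
    have h2 : ¬ supp (chi {p}) ⊆ D := h1
    rw [supp_chi] at h2
    exact h2 (by simpa using hpD)
  intro C C' h
  ext p
  constructor
  · intro hp; by_contra hp'; exact key C C' h p hp' hp
  · intro hp; by_contra hp'; exact key C' C h.symm p hp' hp

lemma exists_decgraph : ∀ (𝒮 : Set (Set (Omega1 × Omega1))), 𝒮.Finite →
    (∀ C ∈ 𝒮, ¬ (Wbig C).Countable) → ∀ δ γ : Omega1,
    ∃ F : Set (Omega1 × Omega1), IsDecGraph F ∧
      (∀ p ∈ F, δ < p.1 ∧ γ < p.2) ∧ ∀ C ∈ 𝒮, ∃ p ∈ F, p ∉ C := by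
  intro 𝒮 hfin
  refine Set.Finite.induction_on (motive := fun 𝒮 _ => (∀ C ∈ 𝒮, ¬ (Wbig C).Countable) →
      ∀ δ γ : Omega1, ∃ F : Set (Omega1 × Omega1), IsDecGraph F ∧
      (∀ p ∈ F, δ < p.1 ∧ γ < p.2) ∧ ∀ C ∈ 𝒮, ∃ p ∈ F, p ∉ C) 𝒮 hfin ?_ (@fun C₀ 𝒮' _ hSfin IH => ?_)
  · intro _ δ γ; exact ⟨∅, isDecGraph_empty, by simp, by simp⟩
  · intro hWall δ γ
    have hC0 : ¬ (Wbig C₀).Countable := hWall C₀ (Set.mem_insert _ _)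
    obtain ⟨α₀, hα₀W, hδα₀⟩ := omega1_unbounded_of_uncountable hC0 δ
    obtain ⟨F', hF', hbnd', hhit'⟩ :=
      IH (fun C hC => hWall C (Set.mem_insert_of_mem _ hC)) α₀ γ
    obtain ⟨B, hB⟩ := omega1_bound (insert γ (Prod.snd '' F'))
      (((hF'.1.image _).countable).insert γ)
    have hβ₀ : ∃ β₀, (α₀, β₀) ∉ C₀ ∧ B < β₀ := by
      by_contra h
      push_neg at h
      exact hα₀W ⟨B, fun β hβ => h β hβ⟩
    obtain ⟨β₀, hβ₀C, hBβ₀⟩ := hβ₀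
    have hltF' : ∀ p ∈ F', α₀ < p.1 ∧ p.2 < β₀ := by
      intro p hp
      exact ⟨(hbnd' p hp).1, lt_trans (hB p.2 (Set.mem_insert_of_mem _ ⟨p, hp, rfl⟩)) hBβ₀⟩
    refine ⟨insert (α₀, β₀) F', isDecGraph_insert hF' hltF', ?_, ?_⟩
    · rintro p (rfl | hp)
      · exact ⟨hδα₀, lt_trans (hB γ (Set.mem_insert _ _)) hBβ₀⟩
      · exact ⟨lt_trans hδα₀ (hbnd' p hp).1, (hbnd' p hp).2⟩
    · rintro C (rfl | hC)
      · exact ⟨(α₀, β₀), Set.mem_insert _ _, hβ₀C⟩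
      · obtain ⟨p, hpF, hpC⟩ := hhit' C hC
        exact ⟨p, Set.mem_insert_of_mem _ hpF, hpC⟩

lemma Bfam_fip : ∀ t ⊆ Bfam, t.Finite → (⋂₀ t).Nonempty := by
  intro t hsub htfin
  have hPfin : (Npt ⁻¹' t).Finite := htfin.preimage (Npt_inj.injOn)
  have hSfin : ((Zset ⁻¹' t) ∩ {C | ¬ (Wbig C).Countable}).Finite :=
    (htfin.preimage (Zset_inj.injOn)).inter_of_left _
  obtain ⟨γ, hγ⟩ := omega1_bound (Prod.snd '' (Npt ⁻¹' t)) ((hPfin.image _).countable)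
  obtain ⟨F, hF, hbnd, hhit⟩ := exists_decgraph _ hSfin (fun C hC => hC.2)
    ⟨0, omega1_isLimit.pos⟩ γ
  refine ⟨⟨chi F, F, hF, rfl⟩, ?_⟩
  intro u hu
  rcases hsub hu with ⟨p, rfl⟩ | ⟨C, hCW, rfl⟩
  · show chi F p = false
    rw [chi_eq_false]
    intro hpF
    have h1 : p.2 < γ := hγ _ ⟨p, hu, rfl⟩
    exact absurd (hbnd p hpF).2 (not_lt.2 (le_of_lt h1))
  · obtain ⟨q, hqF, hqC⟩ := hhit C ⟨hu, hCW⟩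
    show ¬ supp (chi F) ⊆ C
    rw [supp_chi]
    exact fun h => hqC (h hqF)

/-- The filter generated by our family. -/
def GF : Filter ↥(XSpace Omega1) := Filter.generate Bfam

instance GF_neBot : GF.NeBot := Filter.generate_neBot_iff.2 Bfam_fip

/-- Our ultrafilter. -/
def UF : Ultrafilter ↥(XSpace Omega1) := Ultrafilter.of GF

lemma UF_le : (UF : Filter ↥(XSpace Omega1)) ≤ GF := Ultrafilter.of_le GF

/-- The empty graph as a point of `𝒳`. -/
def x0 : ↥(XSpace Omega1) := ⟨chi ∅, ∅, isDecGraph_empty, rfl⟩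

lemma UF_conv : (UF : Filter ↥(XSpace Omega1)) ≤ 𝓝 x0 := by
  refine UF_le.trans ?_
  intro V hV
  rw [nhds_subtype, Filter.mem_comap] at hV
  obtain ⟨W, hW, hWV⟩ := hV
  rw [nhds_pi, Filter.mem_pi] at hW
  obtain ⟨I, hIfin, tt, htt, hsub⟩ := hW
  refine Filter.mem_generate_iff.2 ⟨Npt '' I, ?_, hIfin.image _, ?_⟩
  · rintro u ⟨p, _, rfl⟩
    exact Or.inl ⟨p, rfl⟩
  · intro f hf
    apply hWV
    show f.1 ∈ W
    apply hsub
    rw [Set.mem_pi]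
    intro i hi
    have h1 : f.1 i = false := hf _ ⟨i, hi, rfl⟩
    have h2 : tt i ∈ 𝓝 ((x0.1 : (Omega1 × Omega1) → Bool) i) := htt i
    rw [nhds_discrete, Filter.mem_pure] at h2
    have h3 : (x0.1 : (Omega1 × Omega1) → Bool) i = false := chi_eq_false.2 (by simp)
    rw [h3] at h2
    rw [h1]
    exact h2

/-- The space `𝒳` of all finite graphs of strictly decreasing partial functions from
`ω₁` to `ω₁`, with the topology inherited from `{0,1}^(ω₁ × ω₁)`, is not bisequential. -/
theorem XSpace_not_bisequential : ¬ Bisequential ↥(XSpace Omega1) := by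
  intro hbis
  obtain ⟨U, hU𝒰, _, hUconv⟩ := hbis UF x0 UF_conv
  set Cn : ℕ → Set (Omega1 × Omega1) := fun n => {p | ∃ f ∈ U n, f.1 p = true} with hCn
  have hWcnt : ∀ n, (Wbig (Cn n)).Countable := by
    intro n
    by_contra hn
    have hZ : Zset (Cn n) ∈ (UF : Filter ↥(XSpace Omega1)) :=
      UF_le (Filter.mem_generate_of_mem (Or.inr ⟨Cn n, hn, rfl⟩))
    have hS : {f : ↥(XSpace Omega1) | supp f.1 ⊆ Cn n} ∈ (UF : Filter ↥(XSpace Omega1)) :=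
      Filter.mem_of_superset (hU𝒰 n) (fun f hf p hp => ⟨f, hf, hp⟩)
    obtain ⟨f, hfZ, hfS⟩ := Filter.nonempty_of_mem (Filter.inter_mem hZ hS)
    exact hfZ hfS
  obtain ⟨α, hα⟩ := omega1_uncountable (⋃ n, Wbig (Cn n)) (Set.countable_iUnion hWcnt)
  have hbdd : ∀ n, BddAbove {β | (α, β) ∉ Cn n} := by
    intro n
    by_contra h
    exact hα (Set.mem_iUnion.2 ⟨n, h⟩)
  choose g hg using hbdd
  obtain ⟨β, hβ⟩ := omega1_bound (Set.range g) (Set.countable_range g)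
  have hin : ∀ n, (α, β) ∈ Cn n := by
    intro n
    by_contra hmem
    exact absurd (hg n hmem) (not_le.2 (hβ (g n) (Set.mem_range_self n)))
  have hNx : Npt (α, β) ∈ 𝓝 x0 := by
    have hcont : Continuous fun h : (Omega1 × Omega1) → Bool => h (α, β) := continuous_apply _
    have hopen : IsOpen {h : (Omega1 × Omega1) → Bool | h (α, β) = false} :=
      (isOpen_discrete ({false} : Set Bool)).preimage hcont
    have hmem : {h : (Omega1 × Omega1) → Bool | h (α, β) = false} ∈ 𝓝 (x0.1) :=
      hopen.mem_nhds (chi_eq_false.2 (by simp))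
    exact continuous_subtype_val.continuousAt.preimage_mem_nhds hmem
  obtain ⟨n, hn⟩ := (hUconv _ hNx).exists
  obtain ⟨f, hfU, hfp⟩ := hin n
  have hfalse : f.1 (α, β) = false := hn hfU
  rw [hfalse] at hfp
  exact Bool.false_ne_true hfp

end
end

section
/- Every uniform Eberlein compactum K is a continuous image of a closed subspace of α(λ)^ω for some cardinal λ, where α(λ) denotes the one-point compactification of a discrete space of cardinality λ; moreover one can take λ to be the weight of K. -/
open Cardinal Filter Topology Set

noncomputable section
open Classical

universe u v

set_option linter.unusedSectionVars false
set_option linter.unusedVariables false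
set_option maxHeartbeats 1000000

/-- The weight of a topological space: the least cardinality of a base for the topology. -/
def tweight (X : Type u) [TopologicalSpace X] : Cardinal.{u} :=
  sInf {c | ∃ B : Set (Set X), TopologicalSpace.IsTopologicalBasis B ∧ #B = c}

/-- A canonical discrete space of cardinality `κ`. -/
instance (κ : Cardinal.{u}) : TopologicalSpace κ.out := ⊥

instance (κ : Cardinal.{u}) : DiscreteTopology κ.out := ⟨rfl⟩

namespace UEF

/-- Binary digits of a number in `[0,1]`. -/
lemma exists_binary (y : ℝ) (h0 : 0 ≤ y) (h1 : y ≤ 1) :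
    ∃ b : ℕ → Bool, ∀ M : ℕ,
      |y - ∑ m ∈ Finset.range M, (if b m then ((2:ℝ)⁻¹) ^ (m + 1) else 0)| ≤ (2:ℝ)⁻¹ ^ M := by
  set g : ℕ → ℝ := fun M => Nat.rec (0 : ℝ)
    (fun m s => s + (if s + (2:ℝ)⁻¹ ^ (m+1) ≤ y then (2:ℝ)⁻¹ ^ (m+1) else 0)) M with hg
  have hstep : ∀ m, g (m+1) = g m + (if g m + (2:ℝ)⁻¹ ^ (m+1) ≤ y then (2:ℝ)⁻¹ ^ (m+1) else 0) :=
    fun m => rfl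
  have hinv : ∀ M, g M ≤ y ∧ y ≤ g M + (2:ℝ)⁻¹ ^ M := by
    intro M
    induction M with
    | zero =>
      rw [show g 0 = 0 from rfl]
      constructor
      · exact h0
      · simpa using h1
    | succ M ih =>
      rw [hstep]
      by_cases h : g M + (2:ℝ)⁻¹ ^ (M+1) ≤ y
      · rw [if_pos h]
        constructor
        · exact h
        · have : (2:ℝ)⁻¹ ^ M = (2:ℝ)⁻¹ ^ (M+1) + (2:ℝ)⁻¹ ^ (M+1) := by ring
          nlinarith [ih.2]
      · rw [if_neg h]
        constructor
        · simpa using ih.1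
        · have := not_le.mp h
          linarith
  refine ⟨fun m  => decide (g m + (2:ℝ)⁻¹ ^ (m+1) ≤ y), ?_⟩
  have hsum : ∀ M, (∑ m ∈ Finset.range M,
      (if decide (g m + (2:ℝ)⁻¹ ^ (m+1) ≤ y) then ((2:ℝ)⁻¹) ^ (m + 1) else 0)) = g M := by
    intro M
    induction M with
    | zero => simp [hg]
    | succ M ih =>
      rw [Finset.sum_range_succ, ih, hstep]
      by_cases h : g M + (2:ℝ)⁻¹ ^ (M+1) ≤ y
      · simp [h]
      · simp [h]
  intro M
  rw [hsum]
  have h := hinv M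
  rw [abs_le]
  constructor <;> linarith [h.1, h.2]

lemma le_zero_of_le_pow {a C : ℝ} (hC : 0 ≤ C) (h : ∀ M : ℕ, a ≤ C * (2:ℝ)⁻¹ ^ M) : a ≤ 0 := by
  have ht : Tendsto (fun M : ℕ => C * (2:ℝ)⁻¹ ^ M) atTop (nhds 0) := by
    have := tendsto_pow_atTop_nhds_zero_of_lt_one
      (by norm_num : (0:ℝ) ≤ 2⁻¹) (by norm_num : (2:ℝ)⁻¹ < 1)
    simpa using this.const_mul C
  exact ge_of_tendsto' ht h

variable {K : Type u} [TopologicalSpace K] [CompactSpace K] [T2Space K]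
variable {Γ : Type u} [TopologicalSpace Γ] [DiscreteTopology Γ]

/-- The index type for codes. -/
abbrev T : Type := (ℕ × ℕ) ⊕ (ℕ × ℕ × ℕ)

lemma isClopen_singleton_coe (γ : Γ) : IsClopen {((γ : OnePoint Γ))} := by
  constructor
  · exact isClosed_singleton
  · rw [← Set.image_singleton]
    exact OnePoint.isOpen_image_coe.2 (isOpen_discrete _)

lemma continuous_ite_coe (γ0 : Γ) (r : ℝ) :
    Continuous (fun v : OnePoint Γ => if v = (γ0 : OnePoint Γ) then r else 0) := by
  apply Continuous.if ?_ continuous_const continuous_const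
  intro a ha
  have : {x : OnePoint Γ | x = (γ0 : OnePoint Γ)} = {(γ0 : OnePoint Γ)} := by
    ext; simp
  rw [this, (isClopen_singleton_coe γ0).frontier_eq] at ha
  exact absurd ha (Set.notMem_empty a)

/-- Partial binary sums read off from a code. -/
def psum (γ0 : Γ) (c : T → OnePoint Γ) (q i M : ℕ) : ℝ :=
  ∑ m ∈ Finset.range M, if c (Sum.inr (q, i, m)) = (γ0 : OnePoint Γ) then (2:ℝ)⁻¹ ^ (m + 1) else 0

lemma continuous_psum (γ0 : Γ) (q i M : ℕ) :
    Continuous (fun c : T → OnePoint Γ => psum γ0 c q i M) := by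
  apply continuous_finset_sum
  intro m _
  exact (continuous_ite_coe γ0 _).comp (continuous_apply _)

/-- The coding relation. -/
def Rel (x : Γ → K → ℝ) (γ0 : Γ) : Set ((T → OnePoint Γ) × K) :=
  {p | (∀ q : ℕ, ∀ γ : Γ, (2:ℝ)⁻¹ ^ q < |x γ p.2| →
          ∃ i ∈ Finset.range (4 ^ q), p.1 (Sum.inl (q, i)) = (γ : OnePoint Γ)) ∧
       (∀ q i : ℕ, ∀ γ : Γ, ∀ M : ℕ, p.1 (Sum.inl (q, i)) = (γ : OnePoint Γ) →
          |(x γ p.2 + 1) / 2 - psum γ0 p.1 q i M| ≤ (2:ℝ)⁻¹ ^ M)}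

lemma isClosed_Rel (x : Γ → K → ℝ) (γ0 : Γ) (hcont : ∀ γ, Continuous (x γ)) :
    IsClosed (Rel x γ0) := by
  have hA : ∀ (q : ℕ) (γ : Γ), IsClosed {p : (T → OnePoint Γ) × K |
      (2:ℝ)⁻¹ ^ q < |x γ p.2| → ∃ i ∈ Finset.range (4 ^ q),
        p.1 (Sum.inl (q, i)) = (γ : OnePoint Γ)} := by
    intro q γ
    have : {p : (T → OnePoint Γ) × K |
        (2:ℝ)⁻¹ ^ q < |x γ p.2| → ∃ i ∈ Finset.range (4 ^ q),
          p.1 (Sum.inl (q, i)) = (γ : OnePoint Γ)}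
        = {p : (T → OnePoint Γ) × K | |x γ p.2| ≤ (2:ℝ)⁻¹ ^ q}
          ∪ ⋃ i ∈ Finset.range (4 ^ q),
            {p : (T → OnePoint Γ) × K | p.1 (Sum.inl (q, i)) = (γ : OnePoint Γ)} := by
      ext p
      simp only [Set.mem_setOf_eq, Set.mem_union, Set.mem_iUnion, Set.mem_setOf_eq, exists_prop]
      rw [imp_iff_not_or, not_lt]
    rw [this]
    apply IsClosed.union
    · exact isClosed_le ((hcont γ).comp continuous_snd).abs continuous_const
    · apply (Finset.range (4 ^ q)).finite_toSet.isClosed_biUnion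
      intro i _
      have : {p : (T → OnePoint Γ) × K | p.1 (Sum.inl (q, i)) = (γ : OnePoint Γ)}
          = (fun p : (T → OnePoint Γ) × K => p.1 (Sum.inl (q, i))) ⁻¹' {(γ : OnePoint Γ)} := rfl
      rw [this]
      exact isClosed_singleton.preimage ((continuous_apply (Sum.inl (q, i))).comp continuous_fst)
  have hB : ∀ (q i : ℕ) (γ : Γ) (M : ℕ), IsClosed {p : (T → OnePoint Γ) × K |
      p.1 (Sum.inl (q, i)) = (γ : OnePoint Γ) →
        |(x γ p.2 + 1) / 2 - psum γ0 p.1 q i M| ≤ (2:ℝ)⁻¹ ^ M} := by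
    intro q i γ M
    have : {p : (T → OnePoint Γ) × K | p.1 (Sum.inl (q, i)) = (γ : OnePoint Γ) →
        |(x γ p.2 + 1) / 2 - psum γ0 p.1 q i M| ≤ (2:ℝ)⁻¹ ^ M}
        = ((fun p : (T → OnePoint Γ) × K => p.1 (Sum.inl (q, i))) ⁻¹' {(γ : OnePoint Γ)})ᶜ
          ∪ {p : (T → OnePoint Γ) × K |
              |(x γ p.2 + 1) / 2 - psum γ0 p.1 q i M| ≤ (2:ℝ)⁻¹ ^ M} := by
      ext p
      simp only [Set.mem_setOf_eq, Set.mem_union, Set.mem_compl_iff, Set.mem_preimage,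
        Set.mem_singleton_iff]
      rw [imp_iff_not_or]
    rw [this]
    apply IsClosed.union
    · apply IsOpen.isClosed_compl
      exact (isClopen_singleton_coe γ).isOpen.preimage
        ((continuous_apply (Sum.inl (q, i))).comp continuous_fst)
    · apply isClosed_le ?_ continuous_const
      apply Continuous.abs
      apply Continuous.sub
      · exact (((hcont γ).comp continuous_snd).add continuous_const).div_const 2
      · exact (continuous_psum γ0 q i M).comp continuous_fst
  have : Rel x γ0 = (⋂ q, ⋂ γ : Γ, {p : (T → OnePoint Γ) × K |
      (2:ℝ)⁻¹ ^ q < |x γ p.2| → ∃ i ∈ Finset.range (4 ^ q),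
        p.1 (Sum.inl (q, i)) = (γ : OnePoint Γ)})
      ∩ ⋂ q, ⋂ i, ⋂ γ : Γ, ⋂ M, {p : (T → OnePoint Γ) × K |
      p.1 (Sum.inl (q, i)) = (γ : OnePoint Γ) →
        |(x γ p.2 + 1) / 2 - psum γ0 p.1 q i M| ≤ (2:ℝ)⁻¹ ^ M} := by
    ext p
    simp only [Rel, Set.mem_setOf_eq, Set.mem_inter_iff, Set.mem_iInter]
  rw [this]
  exact IsClosed.inter
    (isClosed_iInter fun q => isClosed_iInter fun γ => hA q γ)
    (isClosed_iInter fun q => isClosed_iInter fun i => isClosed_iInter fun γ =>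
      isClosed_iInter fun M => hB q i γ M)

lemma Rel_unique {x : Γ → K → ℝ} {γ0 : Γ}
    (hsep : ∀ k k' : K, (∀ γ, x γ k = x γ k') → k = k')
    {c : T → OnePoint Γ} {k k' : K}
    (hc : (c, k) ∈ Rel x γ0) (hc' : (c, k') ∈ Rel x γ0) : k = k' := by
  apply hsep
  intro γ
  by_cases h : ∃ q i : ℕ, c (Sum.inl (q, i)) = (γ : OnePoint Γ)
  · obtain ⟨q, i, hqi⟩ := h
    have h1 := fun M => hc.2 q i γ M hqi
    have h2 := fun M => hc'.2 q i γ M hqi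
    have key : ∀ M : ℕ, |(x γ k + 1) / 2 - (x γ k' + 1) / 2| ≤ 2 * (2:ℝ)⁻¹ ^ M := by
      intro M
      have heq : (x γ k + 1) / 2 - (x γ k' + 1) / 2
          = ((x γ k + 1) / 2 - psum γ0 c q i M) - ((x γ k' + 1) / 2 - psum γ0 c q i M) := by
        ring
      rw [heq]
      calc |((x γ k + 1) / 2 - psum γ0 c q i M) - ((x γ k' + 1) / 2 - psum γ0 c q i M)|
          ≤ |(x γ k + 1) / 2 - psum γ0 c q i M| + |(x γ k' + 1) / 2 - psum γ0 c q i M| :=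
            abs_sub _ _
        _ ≤ 2 * (2:ℝ)⁻¹ ^ M := by linarith [h1 M, h2 M]
    have hle : |(x γ k + 1) / 2 - (x γ k' + 1) / 2| ≤ 0 :=
      le_zero_of_le_pow (by norm_num) key
    have := abs_nonpos_iff.mp hle
    linarith
  · push_neg at h
    have hz : ∀ (a : K), ((c, a) ∈ Rel x γ0) → x γ a = 0 := by
      intro a ha
      have hq : ∀ q : ℕ, |x γ a| ≤ (2:ℝ)⁻¹ ^ q := by
        intro q
        by_contra hlt
        obtain ⟨i, _, hi⟩ := ha.1 q γ (not_le.mp hlt)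
        exact h q i hi
      have : |x γ a| ≤ 0 := le_zero_of_le_pow (C := 1) (by norm_num) (by simpa using hq)
      exact abs_nonpos_iff.mp this
    rw [hz k hc, hz k' hc']

lemma Rel_exists {x : Γ → K → ℝ} (γ0 : Γ)
    (hle1 : ∀ γ k, |x γ k| ≤ 1)
    (hfin : ∀ (k : K) (q : ℕ), ∃ t : Finset Γ, t.card ≤ 4 ^ q ∧
      ∀ γ, (2:ℝ)⁻¹ ^ q < |x γ k| → γ ∈ t)
    (k : K) : ∃ c, (c, k) ∈ Rel x γ0 := by
  classical
  set l : ℕ → List Γ := fun q => ((hfin k q).choose.toList) with hl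
  have hlen : ∀ q, (l q).length ≤ 4 ^ q := fun q => by
    rw [hl]; simp only [Finset.length_toList]; exact (hfin k q).choose_spec.1
  have hmem : ∀ q γ, (2:ℝ)⁻¹ ^ q < |x γ k| → γ ∈ l q := fun q γ h => by
    rw [hl]; simp only [Finset.mem_toList]; exact (hfin k q).choose_spec.2 γ h
  set dval : ℕ → ℕ → Γ := fun q i => (l q).getD i γ0 with hdval
  have hy0 : ∀ γ : Γ, 0 ≤ (x γ k + 1) / 2 := fun γ => by
    have := (abs_le.mp (hle1 γ k)).1; linarith
  have hy1 : ∀ γ : Γ, (x γ k + 1) / 2 ≤ 1 := fun γ => by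
    have := (abs_le.mp (hle1 γ k)).2; linarith
  set bt : ℕ → ℕ → ℕ → Bool := fun q i =>
    (exists_binary ((x (dval q i) k + 1) / 2) (hy0 _) (hy1 _)).choose with hbt
  have hbtspec : ∀ q i M, |(x (dval q i) k + 1) / 2
      - ∑ m ∈ Finset.range M, (if bt q i m then ((2:ℝ)⁻¹) ^ (m + 1) else 0)| ≤ (2:ℝ)⁻¹ ^ M :=
    fun q i M =>
      (exists_binary ((x (dval q i) k + 1) / 2) (hy0 _) (hy1 _)).choose_spec M
  refine ⟨fun t => match t with
    | Sum.inl (q, i) => if i < (l q).length then ((dval q i : Γ) : OnePoint Γ) else OnePoint.infty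
    | Sum.inr (q, i, m) => if bt q i m then (γ0 : OnePoint Γ) else OnePoint.infty, ?_, ?_⟩
  · -- condition (A)
    intro q γ hγ
    obtain ⟨n, hn⟩ := List.mem_iff_get.mp (hmem q γ hγ)
    refine ⟨n.1, Finset.mem_range.mpr (lt_of_lt_of_le n.2 (hlen q)), ?_⟩
    show (if n.1 < (l q).length then ((dval q n.1 : Γ) : OnePoint Γ) else OnePoint.infty) = _
    rw [if_pos n.2]
    have : dval q n.1 = γ := by
      show (l q).getD n.1 γ0 = γ
      rw [List.getD_eq_getElem _ _ n.2]
      simpa [List.get_eq_getElem] using hn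
    rw [this]
  · -- condition (B)
    intro q i γ M hslot
    by_cases hi : i < (l q).length
    · have hslot2 : (if i < (l q).length then ((dval q i : Γ) : OnePoint Γ) else OnePoint.infty)
          = (γ : OnePoint Γ) := hslot
      rw [if_pos hi] at hslot2
      have hslot' : ((dval q i : Γ) : OnePoint Γ) = (γ : OnePoint Γ) := hslot2
      have hγ : dval q i = γ := OnePoint.coe_eq_coe.mp hslot'
      have hps : psum γ0 (fun t => match t with
          | Sum.inl (q, i) => if i < (l q).length then ((dval q i : Γ) : OnePoint Γ)
              else OnePoint.infty
          | Sum.inr (q, i, m) => if bt q i m then (γ0 : OnePoint Γ) else OnePoint.infty) q i M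
          = ∑ m ∈ Finset.range M, (if bt q i m then ((2:ℝ)⁻¹) ^ (m + 1) else 0) := by
        unfold psum
        apply Finset.sum_congr rfl
        intro m _
        by_cases hb : bt q i m
        · simp [hb]
        · simp [hb, OnePoint.infty_ne_coe]
      rw [hps, ← hγ]
      exact hbtspec q i M
    · exfalso
      have hslot2 : (if i < (l q).length then ((dval q i : Γ) : OnePoint Γ) else OnePoint.infty)
          = (γ : OnePoint Γ) := hslot
      rw [if_neg hi] at hslot2
      exact (OnePoint.infty_ne_coe γ) hslot2

/-- The core construction. -/
theorem core [Nonempty Γ] (x : Γ → K → ℝ)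
    (hcont : ∀ γ, Continuous (x γ))
    (hsep : ∀ k k' : K, (∀ γ, x γ k = x γ k') → k = k')
    (hle1 : ∀ γ k, |x γ k| ≤ 1)
    (hfin : ∀ (k : K) (q : ℕ), ∃ t : Finset Γ, t.card ≤ 4 ^ q ∧
      ∀ γ, (2:ℝ)⁻¹ ^ q < |x γ k| → γ ∈ t) :
    ∃ F : Set (ℕ → OnePoint Γ), IsClosed F ∧
      ∃ f : ↥F → K, Continuous f ∧ Function.Surjective f := by
  classical
  obtain ⟨γ0⟩ := ‹Nonempty Γ›
  have hclosed := isClosed_Rel x γ0 hcont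
  have hRcompact : IsCompact (Rel x γ0) := hclosed.isCompact
  haveI : CompactSpace ↥(Rel x γ0) := isCompact_iff_compactSpace.mp hRcompact
  -- F0 : the projection of the relation
  set F0 : Set (T → OnePoint Γ) := Prod.fst '' Rel x γ0 with hF0
  have hF0closed : IsClosed F0 := (hRcompact.image continuous_fst).isClosed
  -- the projection is a continuous bijection from the (compact) relation onto F0
  have hcontE : Continuous (fun r : ↥(Rel x γ0) => (⟨r.1.1, ⟨r.1, r.2, rfl⟩⟩ : ↥F0)) :=
    Continuous.subtype_mk (continuous_fst.comp continuous_subtype_val) _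
  set E : ↥(Rel x γ0) ≃ ↥F0 := Equiv.ofBijective
    (fun r => (⟨r.1.1, ⟨r.1, r.2, rfl⟩⟩ : ↥F0)) (by
      constructor
      · rintro ⟨⟨c, k⟩, hr⟩ ⟨⟨c', k'⟩, hr'⟩ hcc
        have h1 : c = c' := congrArg Subtype.val hcc
        subst h1
        have h2 : k = k' := Rel_unique hsep hr hr'
        subst h2
        rfl
      · rintro ⟨c, p, hp, hpc⟩
        exact ⟨⟨p, hp⟩, Subtype.ext hpc⟩) with hE
  have hEcont : Continuous E := hcontE
  let h : ↥(Rel x γ0) ≃ₜ ↥F0 := hEcont.homeoOfEquivCompactToT2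
  -- the decoding map on F0
  set f0 : ↥F0 → K := fun c => ((h.symm c : ↥(Rel x γ0)) : (T → OnePoint Γ) × K).2 with hf0
  have hf0cont : Continuous f0 :=
    (continuous_snd.comp continuous_subtype_val).comp h.symm.continuous
  have hf0surj : Function.Surjective f0 := by
    intro k
    obtain ⟨c, hc⟩ := Rel_exists γ0 hle1 hfin k
    refine ⟨E ⟨(c, k), hc⟩, ?_⟩
    have h1 : h.symm (E ⟨(c, k), hc⟩) = ⟨(c, k), hc⟩ := by
      apply h.injective
      rw [Homeomorph.apply_symm_apply]
      rfl
    simp only [hf0]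
    rw [h1]
  -- transfer to sequences
  let ε : ℕ ≃ T := (Denumerable.eqv T).symm
  let g : (ℕ → OnePoint Γ) ≃ₜ (T → OnePoint Γ) := Homeomorph.piCongrLeft (Y := fun _ => OnePoint Γ) ε
  refine ⟨g ⁻¹' F0, hF0closed.preimage g.continuous, fun c => f0 ⟨g c.1, c.2⟩, ?_, ?_⟩
  · exact hf0cont.comp (Continuous.subtype_mk (g.continuous.comp continuous_subtype_val) _)
  · intro k
    obtain ⟨d, hk⟩ := hf0surj k
    refine ⟨⟨g.symm d.1, by simpa using d.2⟩, ?_⟩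
    have h2 : f0 ⟨g (g.symm d.1), by simpa using d.2⟩ = f0 d := by
      apply congrArg f0
      exact Subtype.ext (g.apply_symm_apply d.1)
    exact h2.trans hk

lemma tweight_spec (X : Type u) [TopologicalSpace X] :
    ∃ B : Set (Set X), TopologicalSpace.IsTopologicalBasis B ∧ #B = tweight X := by
  have hne : {c | ∃ B : Set (Set X), TopologicalSpace.IsTopologicalBasis B ∧ #B = c}.Nonempty :=
    ⟨#({U : Set X | IsOpen U}), {U | IsOpen U}, TopologicalSpace.isTopologicalBasis_opens, rfl⟩
  exact csInf_mem hne

lemma weakspace_t2 (H : Type v) [NormedAddCommGroup H] [InnerProductSpace ℝ H] :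
    T2Space (WeakSpace ℝ H) := by
  refine (WeakBilin.isEmbedding (B := (topDualPairing ℝ H).flip) ?_).t2Space
  intro x x' hxx
  have h := LinearMap.congr_fun hxx (innerSL ℝ (x - x'))
  have h' : (inner ℝ (x - x') x : ℝ) = inner ℝ (x - x') x' := h
  have h2 : (inner ℝ (x - x') (x - x') : ℝ) = 0 := by
    rw [inner_sub_right]
    linarith
  exact sub_eq_zero.mp (inner_self_eq_zero.mp h2)

end UEF

/-- Every uniform Eberlein compactum `K` (a compact space embedding into a Hilbert
space `H` with its weak topology) is a continuous image of a closed subspace of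
`α(λ)^ω`, where `α(λ)` is the one-point compactification of a discrete space of
cardinality `λ`; moreover one can take `λ` to be the weight of `K`. -/
theorem uniformEberlein_image_of_closed_in_onePoint_pow
    (K : Type u) [TopologicalSpace K] [CompactSpace K]
    (H : Type v) [NormedAddCommGroup H] [InnerProductSpace ℝ H] [CompleteSpace H]
    (e : K → WeakSpace ℝ H) (he : IsEmbedding e) :
    ∃ F : Set (ℕ → OnePoint (tweight K).out),
      IsClosed F ∧ ∃ f : ↥F → K, Continuous f ∧ Function.Surjective f := by
  classical
  rcases isEmpty_or_nonempty K with hK | hK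
  · refine ⟨∅, isClosed_empty, fun c => isEmptyElim c, ?_, ?_⟩
    · exact continuous_iff_continuousAt.mpr (fun a => isEmptyElim a)
    · intro k
      exact hK.elim k
  · haveI : T2Space (WeakSpace ℝ H) := UEF.weakspace_t2 H
    haveI hT2 : T2Space K := he.t2Space
    obtain ⟨B, hB, hBcard⟩ := UEF.tweight_spec K
    set Γ := (tweight K).out with hΓ
    have hΓcard : #Γ = tweight K := Cardinal.mk_out _
    obtain ⟨k0⟩ := hK
    have hk0 : k0 ∈ ⋃₀ B := by rw [hB.sUnion_eq]; trivial
    obtain ⟨U0, hU0, -⟩ := hk0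
    haveI hBne : Nonempty ↥B := ⟨⟨U0, hU0⟩⟩
    haveI hΓne : Nonempty Γ := by
      rw [← Cardinal.mk_ne_zero_iff, hΓcard, ← hBcard]
      exact Cardinal.mk_ne_zero ↥B
    by_cases hfinK : Finite K
    · -- finite case: K is finite discrete, and tweight K = #K
      haveI := hfinK
      haveI : DiscreteTopology K := inferInstance
      have hsingmem : ∀ k : K, {k} ∈ B := by
        intro k
        obtain ⟨V, hV, hkV, hVs⟩ := hB.exists_subset_of_mem_open (Set.mem_singleton k)
          (isOpen_discrete {k})
        have : V = {k} := subset_antisymm hVs (Set.singleton_subset_iff.mpr hkV)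
        rwa [this] at hV
      have h1 : #K ≤ tweight K := by
        rw [← hBcard]
        exact Cardinal.mk_le_of_injective (f := fun k : K => (⟨{k}, hsingmem k⟩ : ↥B))
          (fun a b hab => Set.singleton_injective (congrArg Subtype.val hab))
      have h2 : tweight K ≤ #K := by
        have hbasis : TopologicalSpace.IsTopologicalBasis
            (Set.range fun k : K => ({k} : Set K)) := by
          apply TopologicalSpace.isTopologicalBasis_of_isOpen_of_nhds
          · rintro _ ⟨k, rfl⟩
            exact isOpen_discrete _
          · intro a u hau hu
            exact ⟨{a}, ⟨a, rfl⟩, Set.mem_singleton a, Set.singleton_subset_iff.mpr hau⟩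
        have hmem : #↥(Set.range fun k : K => ({k} : Set K))
            ∈ {c | ∃ B : Set (Set K), TopologicalSpace.IsTopologicalBasis B ∧ #B = c} :=
          ⟨_, hbasis, rfl⟩
        exact (csInf_le' hmem).trans Cardinal.mk_range_le
      have hKΓ : #Γ = #K := by rw [hΓcard]; exact le_antisymm h2 h1
      obtain ⟨eqv⟩ : Nonempty (Γ ≃ K) := Cardinal.eq.mp hKΓ
      set x : Γ → K → ℝ := fun γ k => if eqv γ = k then (2:ℝ)⁻¹ else 0 with hx
      apply UEF.core x
      · intro γ
        exact continuous_of_discreteTopology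
      · intro k k' hall
        by_contra hne
        have h := hall (eqv.symm k)
        rw [hx] at h
        dsimp only at h
        rw [Equiv.apply_symm_apply, if_pos rfl, if_neg hne] at h
        norm_num at h
      · intro γ k
        rw [hx]
        dsimp only
        split_ifs <;> norm_num [abs_le]
      · intro k q
        refine ⟨{eqv.symm k}, by simp [Nat.one_le_pow], ?_⟩
        intro γ hγ
        have hne0 : x γ k ≠ 0 := by
          intro h0
          rw [h0] at hγ
          simp only [abs_zero] at hγ
          exact absurd hγ (not_lt.mpr (by positivity))
        have heqk : eqv γ = k := by
          by_contra hne
          rw [hx] at hne0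
          simp only [if_neg hne] at hne0
          exact hne0 rfl
        simp only [Finset.mem_singleton]
        rw [← heqk, Equiv.symm_apply_apply]
    · -- infinite case
      haveI hinfK : Infinite K := not_finite_iff_infinite.mp hfinK
      set ee : K → H := e with hee
      have hweakcont : ∀ ψ : H →L[ℝ] ℝ, Continuous fun k : K => ψ (ee k) := by
        intro ψ
        exact (WeakBilin.eval_continuous _ ψ).comp he.continuous
      have hBS : ∀ ψ : H →L[ℝ] ℝ, ∃ C, ∀ k : K,
          ‖ContinuousLinearMap.apply ℝ ℝ (ee k) ψ‖ ≤ C := by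
        intro ψ
        have hc : Continuous fun k : K => ‖ψ (ee k)‖ := (hweakcont ψ).norm
        obtain ⟨C, hC⟩ := (isCompact_range hc).bddAbove
        exact ⟨C, fun k => hC (Set.mem_range_self k)⟩
      obtain ⟨C0, hC0⟩ := banach_steinhaus (g := fun k : K => ContinuousLinearMap.apply ℝ ℝ (ee k))
        hBS
      set C : ℝ := max C0 0 with hCdef
      have hCnonneg : 0 ≤ C := le_max_right _ _
      have hCpos : (0:ℝ) < C + 1 := by linarith
      have hnorm : ∀ k : K, ‖ee k‖ ≤ C := by
        intro k
        have h1 : ‖ee k‖ ^ 2 = ContinuousLinearMap.apply ℝ ℝ (ee k) (innerSL ℝ (ee k)) := by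
          rw [← real_inner_self_eq_norm_sq]
          rfl
        have h2 : ContinuousLinearMap.apply ℝ ℝ (ee k) (innerSL ℝ (ee k))
            ≤ ‖ContinuousLinearMap.apply ℝ ℝ (ee k)‖ * ‖innerSL ℝ (ee k)‖ := by
          calc ContinuousLinearMap.apply ℝ ℝ (ee k) (innerSL ℝ (ee k))
              ≤ ‖ContinuousLinearMap.apply ℝ ℝ (ee k) (innerSL ℝ (ee k))‖ := le_abs_self _
            _ ≤ _ := ContinuousLinearMap.le_opNorm _ _
        have h3 : ‖innerSL ℝ (ee k)‖ = ‖ee k‖ := innerSL_apply_norm ℝ (ee k)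
        have h4 : ‖ee k‖ ^ 2 ≤ C * ‖ee k‖ := by
          rw [h1]
          refine h2.trans ?_
          rw [h3]
          exact mul_le_mul_of_nonneg_right ((hC0 k).trans (le_max_left _ _)) (norm_nonneg _)
        nlinarith [norm_nonneg (ee k)]
      obtain ⟨w, b, hb⟩ := exists_hilbertBasis ℝ H
      set y : ↥w → K → ℝ := fun s k => (innerSL ℝ ((s : H))) (ee k) / (C + 1) with hy
      have hycont : ∀ s : ↥w, Continuous (y s) := by
        intro s
        exact (hweakcont (innerSL ℝ ((s : H)))).div_const _
      have hysep : ∀ k k' : K, (∀ s : ↥w, y s k = y s k') → k = k' := by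
        intro k k' hall
        have hinner : ∀ s : ↥w, (innerSL ℝ ((s : H))) (ee k) = (innerSL ℝ ((s : H))) (ee k') := by
          intro s
          have h := hall s
          rw [hy] at h
          dsimp only at h
          field_simp at h
          exact h
        have heq : ee k = ee k' := by
          apply b.repr.injective
          ext s
          rw [b.repr_apply_apply, b.repr_apply_apply, hb]
          exact hinner s
        exact he.injective heq
      have haleph : ℵ₀ ≤ tweight K := by
        by_contra hlt
        push_neg at hlt
        rw [← hBcard] at hlt
        have hBfin : B.Finite := Cardinal.lt_aleph0_iff_set_finite.mp hlt
        haveI : Finite ↥B := hBfin.to_subtype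
        have hinj : Function.Injective (fun k : K => {U : ↥B | k ∈ (U : Set K)}) := by
          intro a a' haa
          have haa' : {U : ↥B | a ∈ (U : Set K)} = {U : ↥B | a' ∈ (U : Set K)} := haa
          rw [Set.ext_iff] at haa'
          by_contra hne
          obtain ⟨V, hV, haV, hVs⟩ := hB.exists_subset_of_mem_open
            (Set.mem_compl_singleton_iff.mpr hne : a ∈ ({a'}ᶜ : Set K))
            isClosed_singleton.isOpen_compl
          exact (hVs ((haa' ⟨V, hV⟩).mp haV)) rfl
        exact hfinK (Finite.of_injective _ hinj)
      set good : Set K × Set K → Prop :=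
        fun p => ∃ s : ↥w, ∀ a ∈ p.1, ∀ a' ∈ p.2, y s a ≠ y s a' with hgood
      set σ : {p : ↥(B ×ˢ B) // good p.1} → ↥w := fun p => p.2.choose with hσ
      set S : Set ↥w := Set.range σ with hS
      have hσspec : ∀ p : {p : ↥(B ×ˢ B) // good p.1},
          ∀ a ∈ (p.1.1 : Set K × Set K).1, ∀ a' ∈ (p.1.1 : Set K × Set K).2,
            y (σ p) a ≠ y (σ p) a' := fun p => p.2.choose_spec
      have hScard : Cardinal.lift.{u} (#↥S) ≤ Cardinal.lift.{v} (tweight K) := by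
        have e1 : Cardinal.lift.{u} (#↥S) ≤ Cardinal.lift.{v} (#{p : ↥(B ×ˢ B) // good p.1}) :=
          Cardinal.mk_range_le_lift
        have e2 : #{p : ↥(B ×ˢ B) // good p.1} ≤ #↥(B ×ˢ B) := Cardinal.mk_subtype_le _
        have e3 : #↥(B ×ˢ B) = #↥B * #↥B := by
          rw [Cardinal.mk_congr (Equiv.Set.prod B B), Cardinal.mk_prod,
            Cardinal.lift_id]
        have e4 : #↥B * #↥B = tweight K := by
          rw [hBcard]
          exact Cardinal.mul_eq_self haleph
        refine e1.trans ?_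
        rw [Cardinal.lift_le]
        rw [e3, e4] at e2
        exact e2
      have hSsep : ∀ k k' : K, k ≠ k' → ∃ s ∈ S, y s k ≠ y s k' := by
        have hhelp : ∀ k k' : K, (∃ s : ↥w, y s k < y s k') → ∃ s ∈ S, y s k ≠ y s k' := by
          rintro k k' ⟨s, hs⟩
          set t : ℝ := (y s k + y s k') / 2 with ht
          have hUopen : IsOpen {a : K | y s a < t} := isOpen_lt (hycont s) continuous_const
          have hVopen : IsOpen {a : K | t < y s a} := isOpen_lt continuous_const (hycont s)
          obtain ⟨U, hU, hkU, hUs⟩ := hB.exists_subset_of_mem_open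
            (show k ∈ {a : K | y s a < t} by simp only [Set.mem_setOf_eq, ht]; linarith)
            hUopen
          obtain ⟨V, hV, hk'V, hVs⟩ := hB.exists_subset_of_mem_open
            (show k' ∈ {a : K | t < y s a} by simp only [Set.mem_setOf_eq, ht]; linarith)
            hVopen
          set p : {p : ↥(B ×ˢ B) // good p.1} :=
            ⟨⟨(U, V), Set.mk_mem_prod hU hV⟩,
              ⟨s, fun a ha a' ha' => ne_of_lt (lt_trans (hUs ha) (hVs ha'))⟩⟩ with hp
          exact ⟨σ p, Set.mem_range_self p, hσspec p k hkU k' hk'V⟩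
        intro k k' hne
        have hnall : ¬∀ s : ↥w, y s k = y s k' := fun hall => hne (hysep _ _ hall)
        push_neg at hnall
        obtain ⟨s, hsne⟩ := hnall
        rcases Ne.lt_or_gt hsne with hlt | hlt
        · exact hhelp k k' ⟨s, hlt⟩
        · obtain ⟨s', hs'S, hs'⟩ := hhelp k' k ⟨s, hlt⟩
          exact ⟨s', hs'S, hs'.symm⟩
      have horth : Orthonormal ℝ (fun s : ↥S => ((s : ↥w) : H)) := by
        have h0 : Orthonormal ℝ ((↑) : ↥w → H) := hb ▸ b.orthonormal
        exact h0.comp _ Subtype.val_injective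
      have hnorm1 : ∀ s : ↥w, ‖(s : H)‖ = 1 := by
        intro s
        have h := b.orthonormal.1 s
        rwa [hb] at h
      have hinnerle : ∀ (s : ↥w) (k : K), |(innerSL ℝ ((s : H))) (ee k)| ≤ C := by
        intro s k
        have h1 : |(innerSL ℝ ((s : H))) (ee k)| ≤ ‖(s : H)‖ * ‖ee k‖ :=
          abs_real_inner_le_norm _ _
        rw [hnorm1 s, one_mul] at h1
        exact h1.trans (hnorm k)
      have hyle : ∀ (s : ↥w) (k : K), |y s k| ≤ 1 := by
        intro s k
        rw [hy]
        dsimp only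
        rw [abs_div, abs_of_pos hCpos, div_le_one hCpos]
        exact (hinnerle s k).trans (by linarith)
      have hcount : ∀ (k : K) (q : ℕ) (u : Finset ↥S),
          (∀ s ∈ u, (2:ℝ)⁻¹ ^ q < |y s.1 k|) → u.card ≤ 4 ^ q := by
        intro k q u hu
        have h1 : ∀ s : ↥S, (y s.1 k)^2
            = ‖(innerSL ℝ (((s : ↥w) : H))) (ee k)‖^2 / (C+1)^2 := by
          intro s
          rw [hy]
          dsimp only
          rw [div_pow, Real.norm_eq_abs, sq_abs]
        have h2 : ∑ s ∈ u, (y s.1 k)^2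
            = (∑ s ∈ u, ‖(innerSL ℝ (((s : ↥w) : H))) (ee k)‖^2) / (C+1)^2 := by
          rw [Finset.sum_div]
          exact Finset.sum_congr rfl (fun s _ => h1 s)
        have h3 : ∑ s ∈ u, ‖(inner (𝕜 := ℝ) ((fun s : ↥S => ((s : ↥w) : H)) s) (ee k) : ℝ)‖^2
            ≤ ‖ee k‖^2 := Orthonormal.sum_inner_products_le (𝕜 := ℝ) (ee k) horth
        have h4 : ‖ee k‖^2 ≤ C^2 := by nlinarith [hnorm k, norm_nonneg (ee k)]
        have hsum1 : ∑ s ∈ u, (y s.1 k)^2 ≤ 1 := by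
          rw [h2]
          rw [div_le_one (by positivity)]
          refine (h3.trans h4).trans ?_
          nlinarith
        have h6 : (u.card : ℝ) * ((2:ℝ)⁻¹ ^ q)^2 ≤ ∑ s ∈ u, (y s.1 k)^2 := by
          have h := Finset.card_nsmul_le_sum u (fun s => (y s.1 k)^2) (((2:ℝ)⁻¹ ^ q)^2)
            (fun s hs => by
              have hlt := hu s hs
              have h0 : (0:ℝ) ≤ (2:ℝ)⁻¹ ^ q := by positivity
              nlinarith [sq_abs (y s.1 k), abs_nonneg (y s.1 k)])
          simpa [nsmul_eq_mul] using h
        have hpowpos : (0:ℝ) < ((2:ℝ)⁻¹ ^ q)^2 := by positivity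
        have h8 : (4:ℝ)^q * (((2:ℝ)⁻¹ ^ q)^2) = 1 := by
          rw [show (((2:ℝ)⁻¹ ^ q)^2) = (((2:ℝ)⁻¹ ^ 2)^q) from pow_right_comm _ _ _, ← mul_pow]
          norm_num
        have h7 : (u.card : ℝ) ≤ (4:ℝ)^q := by
          have hc1 : (u.card : ℝ) * (((2:ℝ)⁻¹ ^ q)^2) ≤ (4:ℝ)^q * (((2:ℝ)⁻¹ ^ q)^2) := by
            rw [h8]
            exact h6.trans hsum1
          exact le_of_mul_le_mul_right hc1 hpowpos
        have h9 : ((u.card : ℕ) : ℝ) ≤ ((4^q : ℕ) : ℝ) := by push_cast; exact h7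
        exact_mod_cast h9
      have hyfin : ∀ (k : K) (q : ℕ), {s : ↥S | (2:ℝ)⁻¹ ^ q < |y s.1 k|}.Finite := by
        intro k q
        by_contra hinf
        obtain ⟨u, husub, hucard⟩ :=
          (show Set.Infinite _ from hinf).exists_subset_card_eq (4^q+1)
        have hle := hcount k q u (fun s hs => husub hs)
        omega
      have hcard2 : Cardinal.lift.{u} (#↥S) ≤ Cardinal.lift.{v} (#Γ) := by
        rw [hΓcard]; exact hScard
      obtain ⟨j⟩ : Nonempty (↥S ↪ Γ) := Cardinal.lift_mk_le'.mp hcard2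
      set x : Γ → K → ℝ :=
        Function.extend (fun s : ↥S => j s) (fun s => y s.1) (fun _ => fun _ => (0:ℝ)) with hx
      have hjinj : Function.Injective (fun s : ↥S => j s) := fun a b hab => j.injective hab
      have hx1 : ∀ s : ↥S, x (j s) = y s.1 := fun s => hjinj.extend_apply _ _ s
      have hx2 : ∀ γ : Γ, (¬∃ s : ↥S, j s = γ) → x γ = fun _ => 0 := fun γ h =>
        Function.extend_apply' _ _ _ h
      apply UEF.core x
      · intro γ
        by_cases h : ∃ s : ↥S, j s = γ
        · obtain ⟨s, rfl⟩ := h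
          rw [hx1 s]
          exact hycont s.1
        · rw [hx2 γ h]
          exact continuous_const
      · intro k k' hall
        by_contra hne
        obtain ⟨s, hsS, hsne⟩ := hSsep k k' hne
        have h := hall (j ⟨s, hsS⟩)
        rw [congrFun (hx1 ⟨s, hsS⟩) k, congrFun (hx1 ⟨s, hsS⟩) k'] at h
        exact hsne h
      · intro γ k
        by_cases h : ∃ s : ↥S, j s = γ
        · obtain ⟨s, rfl⟩ := h
          rw [congrFun (hx1 s) k]
          exact hyle s.1 k
        · rw [congrFun (hx2 γ h) k]
          simp
      · intro k q
        refine ⟨((hyfin k q).toFinset).image (fun s : ↥S => j s), ?_, ?_⟩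
        · refine Finset.card_image_le.trans ?_
          apply hcount k q
          intro s hs
          rw [Set.Finite.mem_toFinset] at hs
          exact hs
        · intro γ hγ
          have h : ∃ s : ↥S, j s = γ := by
            by_contra hno
            rw [congrFun (hx2 γ hno) k] at hγ
            simp only [abs_zero] at hγ
            exact absurd hγ (not_lt.mpr (by positivity))
          obtain ⟨s, rfl⟩ := h
          rw [congrFun (hx1 s) k] at hγ
          apply Finset.mem_image_of_mem
          rw [Set.Finite.mem_toFinset]
          exact hγ

end
end

section
/- Let B ⊆ ω₁ × ω₁ with B ∉ 𝓘. For every A ∈ 𝓘 with A ⊆ B and all sets B₁, …, Bₙ ⊆ B with Bᵢ ∉ 𝓘 for each i, the set 𝓕_A(B₁, …, Bₙ) = {C ∈ 𝒳_B : C ∩ A = ∅ and C ∩ Bᵢ ≠ ∅ for all i ≤ n} is nonempty; consequently the family 𝓕 consisting of all sets 𝓕_A = {C ∈ 𝒳_B : C ∩ A = ∅} with A ∈ 𝓘, A ⊆ B, together with all sets 𝓕_A(B₁, …, Bₙ) as above, has the finite intersection property. -/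
open Cardinal Filter Topology Set

noncomputable section
open Classical

/-- The set `𝓕_A = {C ∈ 𝒳_B : C ∩ A = ∅}`. -/
def FA (B A : Set (Omega1 × Omega1)) : Set ↥(XSpaceIn B) :=
  {C | supp (C : (Omega1 × Omega1) → Bool) ∩ A = ∅}

/-- The set `𝓕_A(B₁, …, Bₙ) = {C ∈ 𝒳_B : C ∩ A = ∅ ∧ ∀ i ≤ n, C ∩ Bᵢ ≠ ∅}`. -/
def FAmeets (B A : Set (Omega1 × Omega1)) {n : ℕ} (Bs : Fin n → Set (Omega1 × Omega1)) :
    Set ↥(XSpaceIn B) :=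
  {C | supp (C : (Omega1 × Omega1) → Bool) ∩ A = ∅ ∧
    ∀ i, (supp (C : (Omega1 × Omega1) → Bool) ∩ Bs i).Nonempty}

/-- The family `𝓕` of all sets `𝓕_A` with `A ∈ 𝓘`, `A ⊆ B`, together with all sets
`𝓕_A(B₁, …, Bₙ)` with `A ∈ 𝓘`, `A ⊆ B` and `Bᵢ ⊆ B`, `Bᵢ ∉ 𝓘`. -/
def scrF (B : Set (Omega1 × Omega1)) : Set (Set ↥(XSpaceIn B)) :=
  {S | ∃ A, MemIdealI A ∧ A ⊆ B ∧ S = FA B A} ∪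
  {S | ∃ A, MemIdealI A ∧ A ⊆ B ∧ ∃ (n : ℕ) (Bs : Fin n → Set (Omega1 × Omega1)),
    (∀ i, Bs i ⊆ B ∧ ¬ MemIdealI (Bs i)) ∧ S = FAmeets B A Bs}

instance : Nonempty Omega1 := by
  refine ⟨⟨0, ?_⟩⟩
  have := Cardinal.ord_lt_ord.mpr (Cardinal.aleph_pos 1)
  rwa [Cardinal.ord_zero] at this

lemma omega1_Iic_countable_s11 (x : Omega1) : {y : Omega1 | y ≤ x}.Countable := by
  rw [Cardinal.countable_iff_lt_aleph_one]
  have hlim := Cardinal.isSuccLimit_ord (Cardinal.aleph0_le_aleph 1)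
  have hx : Order.succ (x : Ordinal) < (Cardinal.aleph 1).ord := hlim.succ_lt x.2
  have hinj : Function.Injective (fun y : {y : Omega1 | y ≤ x} =>
      (⟨y.1.1, Set.mem_Iio.mpr (lt_of_le_of_lt (Subtype.coe_le_coe.mpr y.2) (Order.lt_succ _))⟩ : Set.Iio (Order.succ (x : Ordinal)))) := by
    intro a b hab
    have h2 : (a.1.1 : Ordinal) = b.1.1 := by simpa using hab
    exact Subtype.ext (Subtype.ext h2)
  calc #{y : Omega1 | y ≤ x} ≤ #(Set.Iio (Order.succ (x : Ordinal))) := Cardinal.mk_le_of_injective hinj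
    _ = Cardinal.lift.{1} (Order.succ (x : Ordinal)).card := Ordinal.mk_Iio_ordinal _
    _ < Cardinal.aleph 1 := by
        rw [Cardinal.lift_lt_aleph_one]
        exact Cardinal.lt_ord.mp hx

lemma omega1_pick {S : Set Omega1} (hS : ¬ S.Countable) {C : Set Omega1} (hC : C.Countable)
    (x : Omega1) : ∃ y, y ∈ S ∧ y ∉ C ∧ x < y := by
  by_contra h
  push_neg at h
  apply hS
  refine Set.Countable.mono ?_ (hC.union (omega1_Iic_countable_s11 x))
  intro y hy
  by_cases hyC : y ∈ C
  · exact Or.inl hyC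
  · exact Or.inr (h y hy hyC)


lemma memIdealI_empty : MemIdealI (∅ : Set (Omega1 × Omega1)) := by
  have h : {α : Omega1 | ¬ ((vertSection (∅ : Set (Omega1 × Omega1)) α).Countable ∧
      (horSection (∅ : Set (Omega1 × Omega1)) α).Countable)} = ∅ := by
    ext α
    simp only [Set.mem_setOf_eq, Set.mem_empty_iff_false, iff_false, not_not]
    constructor <;>
    · apply Set.Countable.mono _ Set.countable_empty
      intro β hβ
      exact hβ
  rw [MemIdealI, h]
  exact Set.countable_empty

lemma memIdealI_union {A A' : Set (Omega1 × Omega1)} (h : MemIdealI A) (h' : MemIdealI A') :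
    MemIdealI (A ∪ A') := by
  refine Set.Countable.mono ?_ (h.union h')
  intro α hα
  by_contra hc
  simp only [Set.mem_union, Set.mem_setOf_eq, not_or, not_not] at hc
  apply hα
  have hv : vertSection (A ∪ A') α = vertSection A α ∪ vertSection A' α := by
    ext β; simp [vertSection, Set.mem_union]
  have hh : horSection (A ∪ A') α = horSection A α ∪ horSection A' α := by
    ext β; simp [horSection, Set.mem_union]
  exact ⟨hv ▸ hc.1.1.union hc.2.1, hh ▸ hc.1.2.union hc.2.2⟩

lemma uncountable_sections {D : Set (Omega1 × Omega1)} (hD : ¬ MemIdealI D) :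
    ¬ {α | ¬ (vertSection D α).Countable}.Countable ∨
    ¬ {α | ¬ (horSection D α).Countable}.Countable := by
  by_contra h
  push_neg at h
  apply hD
  refine Set.Countable.mono ?_ (h.1.union h.2)
  intro α hα
  rw [Set.mem_setOf_eq, not_and_or] at hα
  exact hα

lemma key : ∀ (n : ℕ) (Bs : Fin n → Set (Omega1 × Omega1)), (∀ i, ¬ MemIdealI (Bs i)) →
    ∀ (A : Set (Omega1 × Omega1)), MemIdealI A → ∀ a₀ b₀ : Omega1,
    ∃ p : Fin n → Omega1 × Omega1,
      (∀ i, p i ∈ Bs i ∧ p i ∉ A) ∧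
      (∀ i, a₀ < (p i).1 ∧ b₀ < (p i).2) ∧
      (∀ i j, (p i).1 < (p j).1 → (p j).2 < (p i).2) ∧
      (∀ i j, i ≠ j → (p i).1 ≠ (p j).1) := by
  intro n
  induction n with
  | zero =>
    intro Bs _ A _ a₀ b₀
    exact ⟨Fin.elim0, fun i => i.elim0, fun i => i.elim0, fun i => i.elim0, fun i => i.elim0⟩
  | succ n IH =>
    intro Bs hBs A hA a₀ b₀
    rcases uncountable_sections (hBs 0) with hV | hH
    · -- vertical case
      obtain ⟨α', hαU, hαA, hαgt⟩ := omega1_pick hV hA a₀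
      rw [Set.mem_setOf_eq] at hαU
      simp only [Set.mem_setOf_eq, not_not] at hαA
      obtain ⟨q, hq1, hq2, hq3, hq4⟩ := IH (fun i => Bs i.succ) (fun i => hBs i.succ) A hA α' b₀
      obtain ⟨b₁, hb₁⟩ := Finite.exists_le (fun i : Fin n => (q i).2)
      obtain ⟨β', hβD, hβA, hβgt⟩ := omega1_pick hαU hαA.1 (max b₀ b₁)
      refine ⟨Fin.cons (α', β') q, ?_, ?_, ?_, ?_⟩
      · intro i
        cases i using Fin.cases with
        | zero => exact ⟨hβD, hβA⟩
        | succ j => simpa using hq1 j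
      · intro i
        cases i using Fin.cases with
        | zero => exact ⟨hαgt, lt_of_le_of_lt (le_max_left _ _) hβgt⟩
        | succ j =>
          simp only [Fin.cons_succ]
          exact ⟨lt_trans hαgt (hq2 j).1, (hq2 j).2⟩
      · intro i j
        cases i using Fin.cases with
        | zero =>
          cases j using Fin.cases with
          | zero => intro h; exact absurd h (lt_irrefl _)
          | succ j' =>
            intro _
            simp only [Fin.cons_zero, Fin.cons_succ]
            exact lt_of_le_of_lt (le_trans (hb₁ j') (le_max_right _ _)) hβgt
        | succ i' =>
          cases j using Fin.cases with
          | zero =>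
            intro h
            simp only [Fin.cons_zero, Fin.cons_succ] at h
            exact absurd h (not_lt.mpr (le_of_lt (hq2 i').1))
          | succ j' =>
            intro h
            simp only [Fin.cons_succ] at *
            exact hq3 i' j' h
      · intro i j
        cases i using Fin.cases with
        | zero =>
          cases j using Fin.cases with
          | zero => intro h; exact absurd rfl h
          | succ j' =>
            intro _
            simp only [Fin.cons_zero, Fin.cons_succ]
            exact ne_of_lt (hq2 j').1
        | succ i' =>
          cases j using Fin.cases with
          | zero =>
            intro _
            simp only [Fin.cons_zero, Fin.cons_succ]
            exact ne_of_gt (hq2 i').1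
          | succ j' =>
            intro h
            simp only [Fin.cons_succ]
            exact hq4 i' j' (fun hh => h (by rw [hh]))
    · -- horizontal case
      obtain ⟨β', hβU, hβA, hβgt⟩ := omega1_pick hH hA b₀
      rw [Set.mem_setOf_eq] at hβU
      simp only [Set.mem_setOf_eq, not_not] at hβA
      obtain ⟨q, hq1, hq2, hq3, hq4⟩ := IH (fun i => Bs i.succ) (fun i => hBs i.succ) A hA a₀ β'
      obtain ⟨a₁, ha₁⟩ := Finite.exists_le (fun i : Fin n => (q i).1)
      obtain ⟨α', hαD, hαA, hαgt⟩ := omega1_pick hβU hβA.2 (max a₀ a₁)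
      refine ⟨Fin.cons (α', β') q, ?_, ?_, ?_, ?_⟩
      · intro i
        cases i using Fin.cases with
        | zero => exact ⟨hαD, hαA⟩
        | succ j => simpa using hq1 j
      · intro i
        cases i using Fin.cases with
        | zero => exact ⟨lt_of_le_of_lt (le_max_left _ _) hαgt, hβgt⟩
        | succ j =>
          simp only [Fin.cons_succ]
          exact ⟨(hq2 j).1, lt_trans hβgt (hq2 j).2⟩
      · intro i j
        cases i using Fin.cases with
        | zero =>
          cases j using Fin.cases with
          | zero => intro h; exact absurd h (lt_irrefl _)
          | succ j' =>
            intro h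
            simp only [Fin.cons_zero, Fin.cons_succ] at h
            exact absurd h (not_lt.mpr (le_of_lt (lt_of_le_of_lt (le_trans (ha₁ j') (le_max_right _ _)) hαgt)))
        | succ i' =>
          cases j using Fin.cases with
          | zero =>
            intro _
            simp only [Fin.cons_zero, Fin.cons_succ]
            exact (hq2 i').2
          | succ j' =>
            intro h
            simp only [Fin.cons_succ] at *
            exact hq3 i' j' h
      · intro i j
        cases i using Fin.cases with
        | zero =>
          cases j using Fin.cases with
          | zero => intro h; exact absurd rfl h
          | succ j' =>
            intro _
            simp only [Fin.cons_zero, Fin.cons_succ]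
            exact ne_of_gt (lt_of_le_of_lt (le_trans (ha₁ j') (le_max_right _ _)) hαgt)
        | succ i' =>
          cases j using Fin.cases with
          | zero =>
            intro _
            simp only [Fin.cons_zero, Fin.cons_succ]
            exact ne_of_lt (lt_of_le_of_lt (le_trans (ha₁ i') (le_max_right _ _)) hαgt)
          | succ j' =>
            intro h
            simp only [Fin.cons_succ]
            exact hq4 i' j' (fun hh => h (by rw [hh]))

lemma exists_FAmeets (B : Set (Omega1 × Omega1)) (A : Set (Omega1 × Omega1)) (hA : MemIdealI A)
    (n : ℕ) (Bs : Fin n → Set (Omega1 × Omega1)) (hBs : ∀ i, Bs i ⊆ B ∧ ¬ MemIdealI (Bs i)) :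
    (FAmeets B A Bs).Nonempty := by
  obtain ⟨x₀⟩ := (inferInstance : Nonempty Omega1)
  obtain ⟨p, h1, h2, h3, h4⟩ := key n Bs (fun i => (hBs i).2) A hA x₀ x₀
  set F : Set (Omega1 × Omega1) := Set.range p with hF
  have hgraph : IsDecGraph F := by
    refine ⟨Set.finite_range p, ?_, ?_⟩
    · rintro _ ⟨i, rfl⟩ _ ⟨j, rfl⟩ h
      by_cases hij : i = j
      · rw [hij]
      · exact absurd h (h4 i j hij)
    · rintro _ ⟨i, rfl⟩ _ ⟨j, rfl⟩ h
      exact h3 i j h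
  have hsub : F ⊆ B := by
    rintro _ ⟨i, rfl⟩
    exact (hBs i).1 (h1 i).1
  have hmem : chi F ∈ XSpaceIn B := ⟨F, hgraph, hsub, rfl⟩
  have hsupp : supp (chi F) = F := by
    ext x
    by_cases h : x ∈ F <;> simp [supp, chi, h]
  refine ⟨⟨chi F, hmem⟩, ?_, ?_⟩
  · show supp (chi F) ∩ A = ∅
    rw [hsupp]
    rw [Set.eq_empty_iff_forall_notMem]
    rintro x ⟨⟨i, rfl⟩, hxA⟩
    exact (h1 i).2 hxA
  · intro i
    refine ⟨p i, ?_, (h1 i).1⟩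
    show p i ∈ supp (chi F)
    rw [hsupp]
    exact ⟨i, rfl⟩

lemma fip_core (B : Set (Omega1 × Omega1)) (T : Set (Set ↥(XSpaceIn B))) (hT : T.Finite) :
    T ⊆ scrF B → ∃ A, MemIdealI A ∧ A ⊆ B ∧ ∃ (n : ℕ) (Bs : Fin n → Set (Omega1 × Omega1)),
      (∀ i, Bs i ⊆ B ∧ ¬ MemIdealI (Bs i)) ∧ FAmeets B A Bs ⊆ ⋂₀ T := by
  refine Set.Finite.induction_on (motive := fun T _ => T ⊆ scrF B →
      ∃ A, MemIdealI A ∧ A ⊆ B ∧ ∃ (n : ℕ) (Bs : Fin n → Set (Omega1 × Omega1)),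
        (∀ i, Bs i ⊆ B ∧ ¬ MemIdealI (Bs i)) ∧ FAmeets B A Bs ⊆ ⋂₀ T) T hT ?_ ?_
  · intro _
    refine ⟨∅, memIdealI_empty, Set.empty_subset _, 0, Fin.elim0, fun i => i.elim0, ?_⟩
    simp
  · intro S T hST hTfin IH hsub
    have hS : S ∈ scrF B := hsub (Set.mem_insert _ _)
    obtain ⟨A, hA, hAB, n, Bs, hBs, hInc⟩ := IH (fun x hx => hsub (Set.mem_insert_of_mem _ hx))
    rcases hS with ⟨A', hA', hA'B, rfl⟩ | ⟨A', hA', hA'B, m, Bs', hBs', rfl⟩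
    · refine ⟨A ∪ A', memIdealI_union hA hA', Set.union_subset hAB hA'B, n, Bs, hBs, ?_⟩
      rintro C ⟨hCA, hCm⟩
      rw [Set.inter_union_distrib_left, Set.union_empty_iff] at hCA
      rw [Set.sInter_insert]
      exact ⟨hCA.2, hInc ⟨hCA.1, hCm⟩⟩
    · refine ⟨A ∪ A', memIdealI_union hA hA', Set.union_subset hAB hA'B, n + m,
        Fin.append Bs Bs', ?_, ?_⟩
      · intro i
        refine Fin.addCases (fun i' => ?_) (fun i' => ?_) i
        · rw [Fin.append_left]; exact hBs i'
        · rw [Fin.append_right]; exact hBs' i'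
      · rintro C ⟨hCA, hCm⟩
        rw [Set.inter_union_distrib_left, Set.union_empty_iff] at hCA
        rw [Set.sInter_insert]
        refine ⟨⟨hCA.2, fun i => ?_⟩, hInc ⟨hCA.1, fun i => ?_⟩⟩
        · have := hCm (Fin.natAdd n i)
          rwa [Fin.append_right] at this
        · have := hCm (Fin.castAdd m i)
          rwa [Fin.append_left] at this

/-- Let `B ∉ 𝓘`. For every `A ∈ 𝓘` with `A ⊆ B` and all `B₁, …, Bₙ ⊆ B` not in `𝓘`,
the set `𝓕_A(B₁, …, Bₙ)` is nonempty; consequently the family `𝓕` has the finite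
intersection property. -/
theorem FAmeets_nonempty_and_fip (B : Set (Omega1 × Omega1)) (hB : ¬ MemIdealI B) :
    (∀ A : Set (Omega1 × Omega1), MemIdealI A → A ⊆ B →
      ∀ (n : ℕ) (Bs : Fin n → Set (Omega1 × Omega1)),
        (∀ i, Bs i ⊆ B ∧ ¬ MemIdealI (Bs i)) → (FAmeets B A Bs).Nonempty) ∧
    (∀ T : Set (Set ↥(XSpaceIn B)), T ⊆ scrF B → T.Finite → (⋂₀ T).Nonempty) := by
  constructor
  · intro A hA _ n Bs hBs
    exact exists_FAmeets B A hA n Bs hBs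
  · intro T hTsub hTfin
    obtain ⟨A, hA, hAB, n, Bs, hBs, hInc⟩ := fip_core B T hTfin hTsub
    exact (exists_FAmeets B A hA n Bs hBs).mono hInc

end
end
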